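/- Suppose nonnegative reals (tᵢ)_{i≥2} and (pⱼ)_{j≥4} satisfy Σ_{i≥2}(9-3i)tᵢ = 9 + 3p₄ + Σ_{j≥5}(3j-9)pⱼ and 3p₄ + Σ_{j≥5} j·pⱼ ≥ 2t₂ - Σ_{i≥3}(i - 3/2)tᵢ - 1. Then t₂ + (3/2)t₃ ≥ 8 + Σ_{i≥4}(2i - 15/2)tᵢ. -/

import Mathlib

theorem stmt5 (n : ℕ) (t p : ℕ → ℝ)
    (ht : ∀ i, 0 ≤ t i) (hp : ∀ j, 0 ≤ p j)
    (hmel : ∑ i ∈ Finset.Icc 2 n, (9 - 3 * (i : ℝ)) * t i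
      = 9 + 3 * p 4 + ∑ j ∈ Finset.Icc 5 n, (3 * (j : ℝ) - 9) * p j)
    (hbound : 3 * p 4 + ∑ j ∈ Finset.Icc 5 n, (j : ℝ) * p j
      ≥ 2 * t 2 - (∑ i ∈ Finset.Icc 3 n, ((i : ℝ) - 3 / 2) * t i) - 1) :
    t 2 + (3 / 2) * t 3 ≥ 8 + ∑ i ∈ Finset.Icc 4 n, (2 * (i : ℝ) - 15 / 2) * t i := by
  have h1 : ∑ j ∈ Finset.Icc 5 n, (j : ℝ) * p j
      ≤ ∑ j ∈ Finset.Icc 5 n, (3 * (j : ℝ) - 9) * p j := by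
    apply Finset.sum_le_sum
    intro j hj
    have hj5 : 5 ≤ j := (Finset.mem_Icc.mp hj).1
    have hj5' : (5 : ℝ) ≤ (j : ℝ) := by exact_mod_cast hj5
    nlinarith [hp j]
  have key : ∀ (f : ℕ → ℝ) (a : ℕ), a ≤ n →
      ∑ i ∈ Finset.Icc a n, f i = f a + ∑ i ∈ Finset.Icc (a + 1) n, f i := by
    intro f a ha
    rw [show Finset.Icc a n = insert a (Finset.Icc (a + 1) n) from by
      rw [Finset.Icc_add_one_left_eq_Ioc, Finset.Ioc_insert_left ha]]
    rw [Finset.sum_insert (by simp)]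
  rcases lt_or_ge n 2 with hn | hn
  · exfalso
    have e2 : Finset.Icc 2 n = ∅ := Finset.Icc_eq_empty (by omega)
    have e5 : Finset.Icc 5 n = ∅ := Finset.Icc_eq_empty (by omega)
    rw [e2, e5] at hmel
    simp at hmel
    nlinarith [hp 4]
  rcases lt_or_ge n 3 with hn3 | hn3
  · have hn2 : n = 2 := by omega
    subst hn2
    have e3 : Finset.Icc 3 2 = ∅ := rfl
    have e4 : Finset.Icc 4 2 = ∅ := rfl
    have e5 : Finset.Icc 5 2 = ∅ := rfl
    rw [e5] at hmel hbound
    rw [e3] at hbound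
    rw [key (fun i => (9 - 3 * (i : ℝ)) * t i) 2 hn] at hmel
    rw [show Finset.Icc (2 + 1) 2 = ∅ from rfl] at hmel
    simp at hmel hbound ⊢
    nlinarith [ht 3]
  · have e1 := key (fun i => (9 - 3 * (i : ℝ)) * t i) 2 hn
    have e2 := key (fun i => (9 - 3 * (i : ℝ)) * t i) 3 hn3
    have e3 := key (fun i => ((i : ℝ) - 3 / 2) * t i) 3 hn3
    beta_reduce at e1 e2 e3
    norm_num at e1 e2 e3
    have e4 : ∑ i ∈ Finset.Icc 4 n, (2 * (i : ℝ) - 15 / 2) * t i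
        = -((∑ i ∈ Finset.Icc 4 n, (9 - 3 * (i : ℝ)) * t i)
          + ∑ i ∈ Finset.Icc 4 n, ((i : ℝ) - 3 / 2) * t i) := by
      rw [← Finset.sum_add_distrib, ← Finset.sum_neg_distrib]
      apply Finset.sum_congr rfl
      intro i _
      ring
    rw [e1, e2] at hmel
    rw [e3] at hbound
    rw [e4]
    linarith [h1, hmel, hbound]
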